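/- Let f : (S¹×S¹)⁵ → ℝ be an alternating, bounded, H-invariant (twisted orientation-sign action) cocycle, and define h₁ : (S¹×S¹)⁴ → ℝ by h₁((x₁,y₁),…,(x₄,y₄)) = f((xᵢ,yⱼ),(x₁,y₁),…,(x₄,y₄)) if there exist i ≠ i′ and j ≠ j′ with xᵢ = x_{i′} and yⱼ = y_{j′}, and h₁ = 0 otherwise. Then h₁ is well defined (independent of the choice of such indices), alternating, bounded, and H-invariant. -/

import Mathlib

open scoped BigOperators

/-- Orientation cocycle on the circle: +1 for positively oriented (counterclockwise)
triples of distinct points, -1 for negatively oriented triples, 0 if two coincide. -/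
noncomputable def orient (a b c : Circle) : ℝ :=
  Real.sign (((starRingEnd ℂ) ((b : ℂ) - (a : ℂ)) * ((c : ℂ) - (a : ℂ))).im)

/-- `x 0, …, x (n-1)` are positively cyclically ordered according to their numbering. -/
def PosCyclicallyOrdered {n : ℕ} (x : Fin n → Circle) : Prop :=
  ∀ i j k : Fin n, i < j → j < k → orient (x i) (x j) (x k) = 1

/-- Θ = Alt(Or₁ ∪ Or₂). -/
noncomputable def Theta (z : Fin 5 → Circle × Circle) : ℝ :=
  (1 / 120) * ∑ σ : Equiv.Perm (Fin 5),
    ((Equiv.Perm.sign σ : ℤ) : ℝ) *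
      (orient (z (σ 0)).1 (z (σ 1)).1 (z (σ 2)).1 *
        orient (z (σ 2)).2 (z (σ 3)).2 (z (σ 4)).2)


/-- An isometry of the hyperbolic plane in the Poincaré disk model: the Möbius
transformation `z ↦ (a z + b)/(b̄ z + ā)` with `|a|² - |b|² = 1` (orientation
preserving when `pres = true`), precomposed with complex conjugation when
`pres = false` (orientation reversing). -/
structure DiskIsom where
  a : ℂ
  b : ℂ
  hnorm : Complex.normSq a - Complex.normSq b = 1
  pres : Bool

namespace DiskIsom

/-- The action on the (closed) disk and its boundary circle. -/
noncomputable def apply (g : DiskIsom) (z : ℂ) : ℂ :=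
  (g.a * (if g.pres then z else (starRingEnd ℂ) z) + g.b) /
    ((starRingEnd ℂ) g.b * (if g.pres then z else (starRingEnd ℂ) z) + (starRingEnd ℂ) g.a)

/-- The boundary action on the circle `S¹ = ∂ℍ²`. -/
noncomputable def applyS (g : DiskIsom) (x : Circle) : Circle :=
  Circle.exp (Complex.arg (g.apply (x : ℂ)))

/-- The orientation sign of an isometry. -/
noncomputable def sgn (g : DiskIsom) : ℝ := if g.pres then 1 else -1

/-- The inverse isometry. -/
noncomputable def inv (g : DiskIsom) : DiskIsom where
  a := if g.pres then (starRingEnd ℂ) g.a else g.a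
  b := -g.b
  hnorm := by
    rcases g.pres with _ | _ <;>
      simp [Complex.normSq_conj, g.hnorm]
  pres := g.pres

end DiskIsom

/-- The geodesic of the hyperbolic plane (Poincaré disk model) with ideal
endpoints `u, v ∈ S¹`, as a subset of the open unit disk in `ℂ`. -/
def geodesic (u v : Circle) : Set ℂ :=
  {z | ‖z‖ < 1 ∧
    (1 + Complex.normSq z) * ((u : ℂ) + (v : ℂ)) - 2 * z
      - 2 * (u : ℂ) * (v : ℂ) * (starRingEnd ℂ) z = 0}

/-- A cochain is alternating. -/
def Alternating {n : ℕ} {X : Type*} (f : (Fin n → X) → ℝ) : Prop :=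
  ∀ (σ : Equiv.Perm (Fin n)) (z : Fin n → X),
    f (fun i => z (σ i)) = ((Equiv.Perm.sign σ : ℤ) : ℝ) * f z

/-- Invariance of a cochain on `(S¹ × S¹)^n` under the twisted (orientation-sign)
action of `H = Isom(ℍ² × ℍ²)`, expressed on the generators: pairs of isometries of
`ℍ²` acting factorwise through their boundary action, and the factor swap. -/
def HInvariant {n : ℕ} (f : (Fin n → Circle × Circle) → ℝ) : Prop :=
  (∀ (g h : DiskIsom) (z : Fin n → Circle × Circle),
      f (fun i => (g.applyS (z i).1, h.applyS (z i).2)) = g.sgn * h.sgn * f z) ∧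
  (∀ z : Fin n → Circle × Circle, f (fun i => ((z i).2, (z i).1)) = f z)

/-- The simplicial coboundary of a cochain. -/
noncomputable def cobdry {n : ℕ} {X : Type*} (f : (Fin (n + 1) → X) → ℝ) :
    (Fin (n + 2) → X) → ℝ :=
  fun z => ∑ i : Fin (n + 2), (-1 : ℝ) ^ (i : ℕ) * f (fun j => z (i.succAbove j))

open Classical in
/-- Number of distinct first coordinates of a tuple in `S¹ × S¹`. -/
noncomputable def ncard₁ {n : ℕ} (z : Fin n → Circle × Circle) : ℕ :=
  (Finset.univ.image fun i => (z i).1).card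

open Classical in
/-- Number of distinct second coordinates of a tuple in `S¹ × S¹`. -/
noncomputable def ncard₂ {n : ℕ} (z : Fin n → Circle × Circle) : ℕ :=
  (Finset.univ.image fun i => (z i).2).card


/-- The degeneracy condition in the definition of `h₁`. -/
def H1Degenerate (z : Fin 4 → Circle × Circle) : Prop :=
  ∃ i i' j j' : Fin 4, i ≠ i' ∧ j ≠ j' ∧ (z i).1 = (z i').1 ∧ (z j).2 = (z j').2

/-- The 5-tuple `((xᵢ,yⱼ), z₁, …, z₄)` obtained by prepending `(xᵢ,yⱼ)` to `z`. -/
def extendTuple (z : Fin 4 → Circle × Circle) (i j : Fin 4) : Fin 5 → Circle × Circle :=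
  Fin.cons ((z i).1, (z j).2) z

open Classical in
/-- The cochain `h₁` associated to `f`. -/
noncomputable def h1 (f : (Fin 5 → Circle × Circle) → ℝ)
    (z : Fin 4 → Circle × Circle) : ℝ :=
  if h : H1Degenerate z then
    f (extendTuple z h.choose h.choose_spec.choose_spec.choose)
  else 0


/-! ### Auxiliary lemmas -/

namespace DiskIsom

lemma abs_b_lt (g : DiskIsom) : ‖g.b‖ < ‖g.a‖ := by
  have h := g.hnorm
  have h2 : Complex.normSq g.b < Complex.normSq g.a := by linarith
  have := Real.sqrt_lt_sqrt (Complex.normSq_nonneg _) h2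
  simpa [Complex.norm_def] using this

lemma den_ne (g : DiskIsom) {ζ : ℂ} (hζ : ‖ζ‖ = 1) :
    (starRingEnd ℂ) g.b * ζ + (starRingEnd ℂ) g.a ≠ 0 := by
  intro h
  have h1 : (starRingEnd ℂ) g.a = -((starRingEnd ℂ) g.b * ζ) := by linear_combination h
  have h2 := congrArg (‖·‖) h1
  simp [norm_mul, hζ, Complex.norm_conj] at h2
  have := g.abs_b_lt
  rw [h2] at this
  exact lt_irrefl _ this

lemma key (g : DiskIsom) : g.a * (starRingEnd ℂ) g.a - g.b * (starRingEnd ℂ) g.b = 1 := by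
  rw [Complex.mul_conj, Complex.mul_conj]
  norm_cast
  exact g.hnorm

lemma num_abs_eq (g : DiskIsom) {ζ : ℂ} (hζ : ‖ζ‖ = 1) :
    ‖(g.a * ζ + g.b)‖ =
      ‖((starRingEnd ℂ) g.b * ζ + (starRingEnd ℂ) g.a)‖ := by
  have hz : ζ * (starRingEnd ℂ) ζ = 1 := by
    rw [Complex.mul_conj]
    norm_cast
    rw [Complex.normSq_eq_norm_sq, hζ]; norm_num
  have hkey : g.a * ζ + g.b
      = ζ * (starRingEnd ℂ) ((starRingEnd ℂ) g.b * ζ + (starRingEnd ℂ) g.a) := by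
    simp only [map_add, map_mul, Complex.conj_conj]
    linear_combination -g.b * hz
  rw [hkey, norm_mul, Complex.norm_conj, hζ, one_mul]

lemma abs_apply_eq_one (g : DiskIsom) (x : Circle) : ‖(g.apply (x : ℂ))‖ = 1 := by
  rw [apply]
  set ζ : ℂ := if g.pres then (x : ℂ) else (starRingEnd ℂ) x with hzdef
  have hζ : ‖ζ‖ = 1 := by
    rw [hzdef]; split <;> [exact Circle.norm_coe x; exact (Complex.norm_conj _).trans (Circle.norm_coe x)]
  rw [norm_div, num_abs_eq g hζ, div_self]
  simp only [ne_eq, norm_eq_zero]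
  exact den_ne g hζ

lemma coe_applyS (g : DiskIsom) (x : Circle) : (g.applyS x : ℂ) = g.apply (x : ℂ) := by
  rw [applyS, Circle.coe_exp]
  have := Complex.norm_mul_exp_arg_mul_I (g.apply (x : ℂ))
  rw [abs_apply_eq_one] at this
  simpa using this

/-- Inverse isometry (auxiliary). -/
noncomputable def myInv (g : DiskIsom) : DiskIsom where
  a := if g.pres then (starRingEnd ℂ) g.a else g.a
  b := if g.pres then -g.b else -((starRingEnd ℂ) g.b)
  hnorm := by
    rcases g with ⟨a, b, hn, p⟩
    cases p <;> simp [Complex.normSq_conj, hn]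
  pres := g.pres

lemma apply_myInv_apply (g : DiskIsom) {x : ℂ} (hx : ‖x‖ = 1) :
    g.myInv.apply (g.apply x) = x := by
  have hkey := g.key
  rcases hp : g.pres with _ | _
  · have d1ne : (starRingEnd ℂ) g.b * (starRingEnd ℂ) x + (starRingEnd ℂ) g.a ≠ 0 :=
      g.den_ne (by simp [Complex.norm_conj, hx])
    simp only [apply, myInv, hp, if_false, Bool.false_eq_true]
    set a := g.a; set b := g.b
    have ene : b * x + a ≠ 0 := by
      intro h
      apply d1ne
      have := congrArg (starRingEnd ℂ) h
      simpa [map_add, map_mul] using this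
    have cw : (starRingEnd ℂ) ((a * (starRingEnd ℂ) x + b) /
        ((starRingEnd ℂ) b * (starRingEnd ℂ) x + (starRingEnd ℂ) a))
        = ((starRingEnd ℂ) a * x + (starRingEnd ℂ) b) / (b * x + a) := by
      rw [map_div₀]
      simp [map_add, map_mul, Complex.conj_conj]
    rw [cw, map_neg, Complex.conj_conj]
    have e2 : -b * (((starRingEnd ℂ) a * x + (starRingEnd ℂ) b) / (b * x + a)) +
        (starRingEnd ℂ) a = 1 / (b * x + a) := by
      field_simp
      linear_combination hkey
    rw [e2, div_div_eq_mul_div, div_one]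
    rw [add_mul, mul_assoc, div_mul_cancel₀ _ ene]
    linear_combination x * hkey
  · have d1ne : (starRingEnd ℂ) g.b * x + (starRingEnd ℂ) g.a ≠ 0 := g.den_ne hx
    simp only [apply, myInv, hp, if_true]
    set a := g.a; set b := g.b
    have e2 : (starRingEnd ℂ) (-b) * ((a * x + b) / ((starRingEnd ℂ) b * x + (starRingEnd ℂ) a)) +
        (starRingEnd ℂ) ((starRingEnd ℂ) a) = 1 / ((starRingEnd ℂ) b * x + (starRingEnd ℂ) a) := by
      rw [map_neg, Complex.conj_conj]
      field_simp
      linear_combination hkey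
    rw [e2, div_div_eq_mul_div, div_one]
    rw [add_mul, mul_assoc, div_mul_cancel₀ _ d1ne]
    linear_combination x * hkey

lemma applyS_injective (g : DiskIsom) : Function.Injective g.applyS := by
  intro x y hxy
  have h : g.apply (x : ℂ) = g.apply (y : ℂ) := by
    rw [← coe_applyS, ← coe_applyS, hxy]
  have h2 : (x : ℂ) = (y : ℂ) := by
    have := congrArg g.myInv.apply h
    rwa [g.apply_myInv_apply (Circle.norm_coe x), g.apply_myInv_apply (Circle.norm_coe y)] at this
  exact Subtype.ext h2

end DiskIsom

lemma comb : ∀ i i' j j' l l' : Fin 4, i ≠ i' → j ≠ j' → l ≠ l' →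
    j ≠ l → j ≠ l' → j' ≠ l → j' ≠ l' →
    ¬((i = j ∧ i' = j') ∨ (i = j' ∧ i' = j)) →
    ¬((i = l ∧ i' = l') ∨ (i = l' ∧ i' = l)) →
    ∃ t : Fin 4, (t = i ∨ t = i') ∧ (t = j ∨ t = j') := by decide

lemma alt_zero {n : ℕ} {X : Type*} {f : (Fin n → X) → ℝ} (halt : Alternating f)
    {w : Fin n → X} {t s : Fin n} (hts : t ≠ s) (h : w t = w s) : f w = 0 := by
  have hsgn := halt (Equiv.swap t s) w
  have hw : (fun i => w (Equiv.swap t s i)) = w := by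
    funext i
    rcases eq_or_ne i t with rfl | hit
    · rw [Equiv.swap_apply_left]; exact h.symm
    rcases eq_or_ne i s with rfl | his
    · rw [Equiv.swap_apply_right]; exact h
    · rw [Equiv.swap_apply_of_ne_of_ne hit his]
  rw [hw, Equiv.Perm.sign_swap hts] at hsgn
  norm_num at hsgn
  linarith

section WD
variable {f : (Fin 5 → Circle × Circle) → ℝ}

lemma ext_zero (halt : Alternating f) {z : Fin 4 → Circle × Circle} {i j : Fin 4} (t : Fin 4)
    (h1 : (z t).1 = (z i).1) (h2 : (z t).2 = (z j).2) : f (extendTuple z i j) = 0 := by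
  refine alt_zero halt (t := (0 : Fin 5)) (s := t.succ) (Fin.succ_ne_zero t).symm ?_
  show extendTuple z i j 0 = extendTuple z i j t.succ
  rw [extendTuple, Fin.cons_zero, Fin.cons_succ]
  exact Prod.ext h1.symm h2.symm

lemma ext_zero' (halt : Alternating f) {z : Fin 4 → Circle × Circle} {i j : Fin 4} {t s : Fin 4}
    (hts : t ≠ s) (h : z t = z s) : f (extendTuple z i j) = 0 := by
  refine alt_zero halt (t := t.succ) (s := s.succ)
    (fun hc => hts (Fin.succ_injective _ hc)) ?_
  show extendTuple z i j t.succ = extendTuple z i j s.succ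
  rw [extendTuple, Fin.cons_succ, Fin.cons_succ]
  exact h

lemma stepY (halt : Alternating f) {z : Fin 4 → Circle × Circle} {i i' j j' l l' : Fin 4}
    (hii' : i ≠ i') (hjj' : j ≠ j') (hll' : l ≠ l')
    (hx : (z i).1 = (z i').1) (hyj : (z j).2 = (z j').2) (hyl : (z l).2 = (z l').2)
    (hne : (z j).2 ≠ (z l).2) (hrep : ∀ t s : Fin 4, t ≠ s → z t ≠ z s) :
    f (extendTuple z i j) = 0 ∧ f (extendTuple z i l) = 0 := by
  have hjl : j ≠ l := fun h => hne (by rw [h])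
  have hjl' : j ≠ l' := fun h => hne (by rw [h, ← hyl])
  have hj'l : j' ≠ l := fun h => hne (by rw [hyj, h])
  have hj'l' : j' ≠ l' := fun h => hne (by rw [hyj, h]; exact hyl.symm)
  have hnotjj : ¬((i = j ∧ i' = j') ∨ (i = j' ∧ i' = j)) := by
    rintro (⟨h1, h2⟩ | ⟨h1, h2⟩) <;>
    · apply hrep j j' hjj'
      refine Prod.ext ?_ hyj
      first
      | rw [← h1, ← h2]; exact hx
      | rw [← h2, ← h1]; exact hx.symm
  have hnotll : ¬((i = l ∧ i' = l') ∨ (i = l' ∧ i' = l)) := by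
    rintro (⟨h1, h2⟩ | ⟨h1, h2⟩) <;>
    · apply hrep l l' hll'
      refine Prod.ext ?_ hyl
      first
      | rw [← h1, ← h2]; exact hx
      | rw [← h2, ← h1]; exact hx.symm
  constructor
  · obtain ⟨t, hti, htj⟩ := comb i i' j j' l l' hii' hjj' hll' hjl hjl' hj'l hj'l' hnotjj hnotll
    refine ext_zero halt t ?_ ?_
    · rcases hti with rfl | rfl
      · rfl
      · exact hx.symm
    · rcases htj with rfl | rfl
      · rfl
      · exact hyj.symm
  · obtain ⟨t, hti, htl⟩ := comb i i' l l' j j' hii' hll' hjj' hjl.symm hj'l.symm hjl'.symm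
      hj'l'.symm hnotll hnotjj
    refine ext_zero halt t ?_ ?_
    · rcases hti with rfl | rfl
      · rfl
      · exact hx.symm
    · rcases htl with rfl | rfl
      · rfl
      · exact hyl.symm

lemma stepX (halt : Alternating f) {z : Fin 4 → Circle × Circle} {i i' k k' j j' : Fin 4}
    (hii' : i ≠ i') (hkk' : k ≠ k') (hjj' : j ≠ j')
    (hxi : (z i).1 = (z i').1) (hxk : (z k).1 = (z k').1) (hyj : (z j).2 = (z j').2)
    (hne : (z i).1 ≠ (z k).1) (hrep : ∀ t s : Fin 4, t ≠ s → z t ≠ z s) :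
    f (extendTuple z i j) = 0 ∧ f (extendTuple z k j) = 0 := by
  have hik : i ≠ k := fun h => hne (by rw [h])
  have hik' : i ≠ k' := fun h => hne (by rw [h, ← hxk])
  have hi'k : i' ≠ k := fun h => hne (by rw [hxi, h])
  have hi'k' : i' ≠ k' := fun h => hne (by rw [hxi, h]; exact hxk.symm)
  have hnotii : ¬((j = i ∧ j' = i') ∨ (j = i' ∧ j' = i)) := by
    rintro (⟨h1, h2⟩ | ⟨h1, h2⟩) <;>
    · apply hrep i i' hii'
      refine Prod.ext hxi ?_
      first
      | rw [← h1, ← h2]; exact hyj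
      | rw [← h2, ← h1]; exact hyj.symm
  have hnotkk : ¬((j = k ∧ j' = k') ∨ (j = k' ∧ j' = k)) := by
    rintro (⟨h1, h2⟩ | ⟨h1, h2⟩) <;>
    · apply hrep k k' hkk'
      refine Prod.ext hxk ?_
      first
      | rw [← h1, ← h2]; exact hyj
      | rw [← h2, ← h1]; exact hyj.symm
  constructor
  · obtain ⟨t, htj, hti⟩ := comb j j' i i' k k' hjj' hii' hkk' hik hik' hi'k hi'k' hnotii hnotkk
    refine ext_zero halt t ?_ ?_
    · rcases hti with rfl | rfl
      · rfl
      · exact hxi.symm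
    · rcases htj with rfl | rfl
      · rfl
      · exact hyj.symm
  · obtain ⟨t, htj, htk⟩ := comb j j' k k' i i' hjj' hkk' hii' hik.symm hi'k.symm hik'.symm
      hi'k'.symm hnotkk hnotii
    refine ext_zero halt t ?_ ?_
    · rcases htk with rfl | rfl
      · rfl
      · exact hxk.symm
    · rcases htj with rfl | rfl
      · rfl
      · exact hyj.symm

lemma ext_congr {z : Fin 4 → Circle × Circle} {i j k l : Fin 4}
    (hx : (z i).1 = (z k).1) (hy : (z j).2 = (z l).2) :
    extendTuple z i j = extendTuple z k l := by
  unfold extendTuple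
  rw [hx, hy]

lemma wd (halt : Alternating f) {z : Fin 4 → Circle × Circle} {i i' j j' k k' l l' : Fin 4}
    (hii' : i ≠ i') (hjj' : j ≠ j') (hkk' : k ≠ k') (hll' : l ≠ l')
    (hxi : (z i).1 = (z i').1) (hyj : (z j).2 = (z j').2)
    (hxk : (z k).1 = (z k').1) (hyl : (z l).2 = (z l').2) :
    f (extendTuple z i j) = f (extendTuple z k l) := by
  by_cases hrep : ∃ t s : Fin 4, t ≠ s ∧ z t = z s
  · obtain ⟨t, s, hts, h⟩ := hrep
    rw [ext_zero' halt hts h, ext_zero' halt hts h]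
  · push_neg at hrep
    by_cases hxik : (z i).1 = (z k).1
    · by_cases hyjl : (z j).2 = (z l).2
      · rw [ext_congr hxik hyjl]
      · rw [show extendTuple z k l = extendTuple z i l from ext_congr hxik.symm rfl]
        obtain ⟨h1, h2⟩ := stepY halt hii' hjj' hll' hxi hyj hyl hyjl hrep
        rw [h1, h2]
    · obtain ⟨hA, hB⟩ := stepX halt hii' hkk' hjj' hxi hxk hyj hxik hrep
      by_cases hyjl : (z j).2 = (z l).2
      · rw [show extendTuple z k l = extendTuple z k j from ext_congr rfl hyjl.symm, hA, hB]
      · obtain ⟨hC, hD⟩ := stepY halt hkk' hjj' hll' hxk hyj hyl hyjl hrep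
        rw [hA, hD]

lemma h1_eq (halt : Alternating f) {z : Fin 4 → Circle × Circle} {i i' j j' : Fin 4}
    (hii' : i ≠ i') (hjj' : j ≠ j') (hx : (z i).1 = (z i').1) (hy : (z j).2 = (z j').2) :
    h1 f z = f (extendTuple z i j) := by
  have hdeg : H1Degenerate z := ⟨i, i', j, j', hii', hjj', hx, hy⟩
  rw [h1, dif_pos hdeg]
  obtain ⟨h1', h2', h3', h4'⟩ := hdeg.choose_spec.choose_spec.choose_spec.choose_spec
  exact wd halt h1' h2' hii' hjj' h3' h4' hx hy

end WD

/-- `h₁` is well defined (its value does not depend on the choice of indices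
witnessing the degeneracy), alternating, bounded and `H`-invariant. -/
theorem h1_well_defined_and_invariant (f : (Fin 5 → Circle × Circle) → ℝ)
    (halt : Alternating f) (hbdd : ∃ C : ℝ, ∀ z, |f z| ≤ C) (hinv : HInvariant f)
    (hcocycle : ∀ w : Fin 6 → Circle × Circle, cobdry f w = 0) :
    (∀ (z : Fin 4 → Circle × Circle) (i i' j j' : Fin 4), i ≠ i' → j ≠ j' →
        (z i).1 = (z i').1 → (z j).2 = (z j').2 → h1 f z = f (extendTuple z i j)) ∧
      Alternating (h1 f) ∧ (∃ C : ℝ, ∀ z, |h1 f z| ≤ C) ∧ HInvariant (h1 f) := by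
  obtain ⟨hinv1, hinv2⟩ := hinv
  have part1 : ∀ (z : Fin 4 → Circle × Circle) (i i' j j' : Fin 4), i ≠ i' → j ≠ j' →
      (z i).1 = (z i').1 → (z j).2 = (z j').2 → h1 f z = f (extendTuple z i j) :=
    fun z i i' j j' ha hb hc hd => h1_eq halt ha hb hc hd
  refine ⟨part1, ?_, ?_, ?_, ?_⟩
  · -- Alternating
    intro σ z
    by_cases hdeg : H1Degenerate z
    · obtain ⟨i, i', j, j', hii', hjj', hx, hy⟩ := hdeg
      have hl : h1 f (fun m => z (σ m)) =
          f (extendTuple (fun m => z (σ m)) (σ.symm i) (σ.symm j)) :=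
        h1_eq (i' := σ.symm i') (j' := σ.symm j') halt
          (fun hc => hii' (by simpa using congrArg σ hc))
          (fun hc => hjj' (by simpa using congrArg σ hc))
          (by simpa using hx) (by simpa using hy)
      set τ : Equiv.Perm (Fin 5) := Equiv.Perm.decomposeFin.symm (0, σ) with hτ
      have hperm : extendTuple (fun m => z (σ m)) (σ.symm i) (σ.symm j) =
          fun m => (extendTuple z i j) (τ m) := by
        funext m
        refine Fin.cases ?_ (fun t => ?_) m
        · simp [hτ, extendTuple, Equiv.Perm.decomposeFin_symm_apply_zero]
        · simp [hτ, extendTuple, Equiv.Perm.decomposeFin_symm_apply_succ]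
      rw [hl, hperm, halt τ (extendTuple z i j),
        part1 z i i' j j' hii' hjj' hx hy]
      congr 2
      rw [hτ, Equiv.Perm.decomposeFin.symm_sign]
      norm_num
    · have hdeg' : ¬ H1Degenerate (fun m => z (σ m)) := by
        rintro ⟨i, i', j, j', h1', h2', h3', h4'⟩
        exact hdeg ⟨σ i, σ i', σ j, σ j', fun hc => h1' (σ.injective hc),
          fun hc => h2' (σ.injective hc), h3', h4'⟩
      unfold h1
      rw [dif_neg hdeg', dif_neg hdeg, mul_zero]
  · -- Bounded
    obtain ⟨C, hC⟩ := hbdd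
    refine ⟨C, fun z => ?_⟩
    by_cases hdeg : H1Degenerate z
    · unfold h1
      rw [dif_pos hdeg]
      exact hC _
    · unfold h1
      rw [dif_neg hdeg, abs_zero]
      exact le_trans (abs_nonneg _) (hC fun _ => (1, 1))
  · -- H-invariance, product isometries
    intro g h z
    by_cases hdeg : H1Degenerate z
    · obtain ⟨i, i', j, j', hii', hjj', hx, hy⟩ := hdeg
      have hL : h1 f (fun m => (g.applyS (z m).1, h.applyS (z m).2)) =
          f (extendTuple (fun m => (g.applyS (z m).1, h.applyS (z m).2)) i j) :=
        h1_eq halt hii' hjj' (congrArg g.applyS hx) (congrArg h.applyS hy)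
      have hE : extendTuple (fun m => (g.applyS (z m).1, h.applyS (z m).2)) i j
          = fun m => (g.applyS ((extendTuple z i j) m).1,
              h.applyS ((extendTuple z i j) m).2) := by
        funext m
        refine Fin.cases ?_ (fun t => ?_) m <;> simp [extendTuple]
      rw [hL, hE, hinv1 g h (extendTuple z i j), part1 z i i' j j' hii' hjj' hx hy]
    · have hdeg' : ¬ H1Degenerate (fun m => (g.applyS (z m).1, h.applyS (z m).2)) := by
        rintro ⟨i, i', j, j', h1', h2', h3', h4'⟩
        exact hdeg ⟨i, i', j, j', h1', h2', g.applyS_injective h3', h.applyS_injective h4'⟩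
      unfold h1
      rw [dif_neg hdeg', dif_neg hdeg, mul_zero]
  · -- H-invariance, swap
    intro z
    by_cases hdeg : H1Degenerate z
    · obtain ⟨i, i', j, j', hii', hjj', hx, hy⟩ := hdeg
      have hL : h1 f (fun m => ((z m).2, (z m).1)) =
          f (extendTuple (fun m => ((z m).2, (z m).1)) j i) :=
        h1_eq halt hjj' hii' hy hx
      have hE : extendTuple (fun m => ((z m).2, (z m).1)) j i
          = fun m => (((extendTuple z i j) m).2, ((extendTuple z i j) m).1) := by
        funext m
        refine Fin.cases ?_ (fun t => ?_) m <;> simp [extendTuple]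
      rw [hL, hE, hinv2 (extendTuple z i j), part1 z i i' j j' hii' hjj' hx hy]
    · have hdeg' : ¬ H1Degenerate (fun m => ((z m).2, (z m).1)) := by
        rintro ⟨i, i', j, j', h1', h2', h3', h4'⟩
        exact hdeg ⟨j, j', i, i', h2', h1', h4', h3'⟩
      unfold h1
      rw [dif_neg hdeg', dif_neg hdeg]
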